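/- Let Q ∈ L(H) be a J-normal projection on a Krein space (H,J), with E = Q Q^#, P = Q(I − Q^#), F = (I − Q)(I − Q)^#. Then E + P + P^# + F = I, and hence H decomposes as the J-orthogonal direct sum H = R(E) [+] R(P + P^#) [+] R(F) of the ranges of the projections E, P + P^#, and F. -/

import Mathlib

open ContinuousLinearMap

variable {H : Type*} [NormedAddCommGroup H] [InnerProductSpace ℂ H] [CompleteSpace H]

/-- The `J`-adjoint `T^# = J T* J`. -/
noncomputable def sharp (J T : H →L[ℂ] H) : H →L[ℂ] H :=
  J ∘L (ContinuousLinearMap.adjoint T) ∘L J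

lemma sharp_comp' (J A B : H →L[ℂ] H) (hJ2 : J ∘L J = 1) :
    sharp J (A ∘L B) = sharp J B ∘L sharp J A := by
  have hJ : ∀ x, J (J x) = x := fun x => by
    have := ContinuousLinearMap.ext_iff.mp hJ2 x; simpa using this
  ext x
  simp [sharp, ContinuousLinearMap.comp_apply, hJ]

lemma sharp_add' (J A B : H →L[ℂ] H) : sharp J (A + B) = sharp J A + sharp J B := by
  simp [sharp, map_add, add_comp, comp_add]

lemma sharp_sub' (J A B : H →L[ℂ] H) : sharp J (A - B) = sharp J A - sharp J B := by
  simp [sharp, map_sub, sub_comp, comp_sub]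

lemma sharp_one' (J : H →L[ℂ] H) (hJ2 : J ∘L J = 1) : sharp J 1 = 1 := by
  unfold sharp
  rw [show ContinuousLinearMap.adjoint (1 : H →L[ℂ] H) = 1 from adjoint_id,
    ContinuousLinearMap.one_def, ContinuousLinearMap.id_comp, hJ2]
  exact ContinuousLinearMap.one_def.symm

lemma sharp_sharp' (J T : H →L[ℂ] H) (hJsa : ContinuousLinearMap.adjoint J = J)
    (hJ2 : J ∘L J = 1) : sharp J (sharp J T) = T := by
  have hJ : ∀ x, J (J x) = x := fun x => by
    have := ContinuousLinearMap.ext_iff.mp hJ2 x; simpa using this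
  ext x
  simp [sharp, ContinuousLinearMap.comp_apply, adjoint_comp, hJsa, adjoint_adjoint, hJ]

lemma orth' (J A B : H →L[ℂ] H) (hJsa : ContinuousLinearMap.adjoint J = J)
    (hJ2 : J ∘L J = 1) (h : sharp J A ∘L B = 0) :
    ∀ x y, (inner ℂ (J (A x)) (B y) : ℂ) = 0 := by
  have hJ : ∀ x, J (J x) = x := fun x => by
    have := ContinuousLinearMap.ext_iff.mp hJ2 x; simpa using this
  intro x y
  have h0 : J (ContinuousLinearMap.adjoint A (J (B y))) = 0 := by
    have := ContinuousLinearMap.ext_iff.mp h y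
    simpa [sharp, ContinuousLinearMap.comp_apply] using this
  have h1 : ContinuousLinearMap.adjoint A (J (B y)) = 0 := by
    have := congrArg J h0; simpa [hJ] using this
  calc (inner ℂ (J (A x)) (B y) : ℂ) = inner ℂ (A x) (J (B y)) := by
        rw [← hJsa, adjoint_inner_left, hJsa]
    _ = inner ℂ x (ContinuousLinearMap.adjoint A (J (B y))) := by
        rw [adjoint_inner_right]
    _ = 0 := by rw [h1, inner_zero_right]

/-- For a `J`-normal projection `Q`: `E + P + P^# + F = I`, and the ranges of `E`, `P + P^#`
and `F` are mutually `J`-orthogonal, so `H` is their `J`-orthogonal direct sum. -/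
theorem stmt4 (J Q : H →L[ℂ] H)
    (hJsa : ContinuousLinearMap.adjoint J = J) (hJ2 : J ∘L J = 1)
    (hQ : Q ∘L Q = Q) (hN : Q ∘L sharp J Q = sharp J Q ∘L Q)
    (E P F : H →L[ℂ] H)
    (hE : E = Q ∘L sharp J Q) (hP : P = Q ∘L (1 - sharp J Q))
    (hF : F = (1 - Q) ∘L sharp J (1 - Q)) :
    E + P + sharp J P + F = 1 ∧
    LinearMap.range (E : H →ₗ[ℂ] H) ⊔ LinearMap.range ((P + sharp J P : H →L[ℂ] H) : H →ₗ[ℂ] H) ⊔ LinearMap.range (F : H →ₗ[ℂ] H) = ⊤ ∧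
    (∀ f ∈ LinearMap.range (E : H →ₗ[ℂ] H), ∀ g ∈ LinearMap.range ((P + sharp J P : H →L[ℂ] H) : H →ₗ[ℂ] H),
      (inner ℂ (J f) g : ℂ) = 0) ∧
    (∀ f ∈ LinearMap.range (E : H →ₗ[ℂ] H), ∀ g ∈ LinearMap.range (F : H →ₗ[ℂ] H), (inner ℂ (J f) g : ℂ) = 0) ∧
    (∀ f ∈ LinearMap.range ((P + sharp J P : H →L[ℂ] H) : H →ₗ[ℂ] H), ∀ g ∈ LinearMap.range (F : H →ₗ[ℂ] H),
      (inner ℂ (J f) g : ℂ) = 0) := by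
  set S := sharp J Q with hS
  -- basic multiplicative relations
  have hq : Q * Q = Q := hQ
  have hs : S * S = S := by
    have := sharp_comp' J Q Q hJ2
    rw [hQ] at this
    exact this.symm
  have hc : S * Q = Q * S := hN.symm
  have hsS : sharp J S = Q := sharp_sharp' J Q hJsa hJ2
  -- rewrite sharp of the pieces
  have hsP : sharp J P = S - Q * S := by
    rw [hP, sharp_comp' J Q _ hJ2, sharp_sub', sharp_one' J hJ2, hsS, ← hS]
    simp only [← ContinuousLinearMap.mul_def]
    noncomm_ring
  have hsF : sharp J (1 - Q) = 1 - S := by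
    rw [sharp_sub', sharp_one' J hJ2, ← hS]
  -- express everything as ring elements
  have hE' : E = Q * S := hE
  have hP' : P = Q - Q * S := by
    rw [hP]
    simp only [← ContinuousLinearMap.mul_def]
    noncomm_ring
  have hF' : F = 1 - Q - S + Q * S := by
    rw [hF, hsF]
    simp only [← ContinuousLinearMap.mul_def]
    noncomm_ring
  -- the sum identity
  have hsum : E + P + sharp J P + F = 1 := by
    rw [hsP, hE', hP', hF']; abel
  -- reduction lemmas
  have hQS_Q : Q * S * Q = Q * S := by
    rw [mul_assoc, hc, ← mul_assoc, hq]
  have hQS_S : Q * S * S = Q * S := by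
    rw [mul_assoc, hs]
  -- products are zero
  have hEG : E ∘L (P + sharp J P) = 0 := by
    rw [hsP, hE', hP']
    simp only [← ContinuousLinearMap.mul_def]
    simp only [mul_sub, sub_mul, mul_add, add_mul, mul_one, one_mul, ← mul_assoc]
    simp only [hq, hs, hc, hQS_Q, hQS_S]
    abel
  have hEF : E ∘L F = 0 := by
    rw [hE', hF']
    simp only [← ContinuousLinearMap.mul_def]
    simp only [mul_sub, sub_mul, mul_add, add_mul, mul_one, one_mul, ← mul_assoc]
    simp only [hq, hs, hc, hQS_Q, hQS_S]
    abel
  have hGF : (P + sharp J P) ∘L F = 0 := by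
    rw [hsP, hP', hF']
    simp only [← ContinuousLinearMap.mul_def]
    simp only [mul_sub, sub_mul, mul_add, add_mul, mul_one, one_mul, ← mul_assoc]
    simp only [hq, hs, hc, hQS_Q, hQS_S]
    abel
  have hsE : sharp J E = E := by
    rw [hE, sharp_comp' J Q S hJ2, hsS, ← hS]
  have hsG : sharp J (P + sharp J P) = P + sharp J P := by
    rw [sharp_add', sharp_sharp' J P hJsa hJ2, add_comm]
  refine ⟨hsum, ?_, ?_, ?_, ?_⟩
  · rw [eq_top_iff]
    intro x _
    have h1 : E x + P x + (sharp J P) x + F x = x := by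
      have := ContinuousLinearMap.ext_iff.mp hsum x
      simpa [ContinuousLinearMap.add_apply] using this
    have hx : E x + (P + sharp J P) x + F x = x := by
      have h2 : E x + (P x + (sharp J P) x) + F x = E x + P x + (sharp J P) x + F x := by
        abel
      rw [ContinuousLinearMap.add_apply, h2, h1]
    rw [← hx]
    exact add_mem (add_mem
      (Submodule.mem_sup_left (Submodule.mem_sup_left ⟨x, rfl⟩))
      (Submodule.mem_sup_left (Submodule.mem_sup_right ⟨x, rfl⟩)))
      (Submodule.mem_sup_right ⟨x, rfl⟩)
  · rintro f ⟨x, rfl⟩ g ⟨y, rfl⟩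
    exact orth' J E (P + sharp J P) hJsa hJ2 (by rw [hsE]; exact hEG) x y
  · rintro f ⟨x, rfl⟩ g ⟨y, rfl⟩
    exact orth' J E F hJsa hJ2 (by rw [hsE]; exact hEF) x y
  · rintro f ⟨x, rfl⟩ g ⟨y, rfl⟩
    exact orth' J (P + sharp J P) F hJsa hJ2 (by rw [hsG]; exact hGF) x y
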